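/- arXiv:1601.07695 — 3 statements merged into one kernel-verified Lean document; each statement's English description precedes it below -/
import Mathlib

section
/- For any real 3×3 symmetric traceless matrix Q, and any ε > 0, one has trace(Q³) ≤ (3ε/8)·(trace(Q²))² + (3/(2ε))·trace(Q²). -/
open Matrix

lemma trace_pow_eq (Q : Matrix (Fin 3) (Fin 3) ℝ) (hQ : Q.IsHermitian) (k : ℕ) :
    (Q ^ k).trace = ∑ i, (hQ.eigenvalues i) ^ k := by
  set U : Matrix (Fin 3) (Fin 3) ℝ := (hQ.eigenvectorUnitary : Matrix (Fin 3) (Fin 3) ℝ) with hUdef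
  set D : Matrix (Fin 3) (Fin 3) ℝ := Matrix.diagonal (RCLike.ofReal ∘ hQ.eigenvalues) with hDdef
  have hU : star U * U = 1 := (Matrix.mem_unitaryGroup_iff').mp hQ.eigenvectorUnitary.2
  have hU' : U * star U = 1 := (Matrix.mem_unitaryGroup_iff).mp hQ.eigenvectorUnitary.2
  have h : Q = U * D * star U := hQ.spectral_theorem
  have hpow : Q ^ k = U * D ^ k * star U := by
    induction k with
    | zero => simp [pow_zero, hU']
    | succ n ih =>
        calc Q ^ (n+1) = Q ^ n * Q := pow_succ Q n
        _ = (U * D ^ n * star U) * (U * D * star U) := by rw [ih, ← h]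
        _ = U * D ^ n * (star U * U) * D * star U := by
              simp only [Matrix.mul_assoc]
        _ = U * D ^ (n+1) * star U := by
              rw [hU, Matrix.mul_one, pow_succ]
              simp only [Matrix.mul_assoc]
  rw [hpow, Matrix.trace_mul_cycle, hU, Matrix.one_mul,
    Matrix.diagonal_pow, Matrix.trace_diagonal]
  simp

lemma key_ineq (a b c ε : ℝ) (hsum : a + b + c = 0) (hε : 0 < ε) :
    a ^ 3 + b ^ 3 + c ^ 3 ≤
      3 * ε / 8 * (a ^ 2 + b ^ 2 + c ^ 2) ^ 2 + 3 / (2 * ε) * (a ^ 2 + b ^ 2 + c ^ 2) := by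
  have hc : c = -(a + b) := by linarith
  subst hc
  set s : ℝ := a ^ 2 + b ^ 2 + (-(a+b)) ^ 2 with hs
  set t : ℝ := a ^ 3 + b ^ 3 + (-(a+b)) ^ 3 with htd
  have hs0 : 0 ≤ s := by positivity
  have hts : t ^ 2 ≤ s ^ 3 := by
    rw [htd, hs]
    nlinarith [pow_nonneg (sq_nonneg (a+b)) 3, pow_nonneg (sq_nonneg (a-b)) 3,
      mul_nonneg (mul_nonneg (sq_nonneg (a+b)) (sq_nonneg (a+b))) (sq_nonneg (a-b)),
      mul_nonneg (mul_nonneg (sq_nonneg (a-b)) (sq_nonneg (a-b))) (sq_nonneg (a+b))]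
  clear_value s t
  clear hs htd
  set R : ℝ := 3 * ε / 8 * s ^ 2 + 3 / (2 * ε) * s with hR
  have hA : 0 ≤ 3 * ε / 8 * s ^ 2 := by positivity
  have hB : 0 ≤ 3 / (2 * ε) * s := by positivity
  have hR0 : 0 ≤ R := by rw [hR]; positivity
  have hcross : (3 * ε / 8 * s ^ 2) * (3 / (2 * ε) * s) = 9 / 16 * s ^ 3 := by
    field_simp; ring
  have hR2 : s ^ 3 ≤ R ^ 2 := by
    rw [hR]
    nlinarith [sq_nonneg (3 * ε / 8 * s ^ 2), sq_nonneg (3 / (2 * ε) * s), hcross, hs0,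
      pow_nonneg hs0 3]
  rcases le_or_gt t 0 with ht | ht
  · linarith
  · nlinarith [hts, hR2, hR0, ht]

theorem trace_cube_le (Q : Matrix (Fin 3) (Fin 3) ℝ) (hsymm : Q.IsSymm)
    (htr : Q.trace = 0) (ε : ℝ) (hε : 0 < ε) :
    (Q ^ 3).trace ≤ 3 * ε / 8 * ((Q ^ 2).trace) ^ 2 + 3 / (2 * ε) * (Q ^ 2).trace := by
  have hQ : Q.IsHermitian := hsymm
  have h1 := trace_pow_eq Q hQ 1
  have h2 := trace_pow_eq Q hQ 2
  have h3 := trace_pow_eq Q hQ 3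
  rw [pow_one] at h1
  rw [Fin.sum_univ_three] at h1 h2 h3
  rw [h2, h3]
  apply key_ineq
  · rw [htr] at h1
    simpa using h1.symm
  · exact hε
end

section
/- Assume a > 0, c > 0, and ac ≥ (9/16)b². Then with ε := 8c/(3|b|) (for b ≠ 0), one has |b|·(3ε/8) − c ≤ 0 and |b|·(3/(2ε)) − a ≤ −(a − 9b²/(16c)) where a − 9b²/(16c) ≥ 0. In particular, for every real 3×3 symmetric traceless matrix Q, −a·trace(Q²) + b·trace(Q³) − c·(trace(Q²))² ≤ −(a − 9b²/(16c))·trace(Q²). -/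
open Matrix

open Finset in
lemma key_csq (Q : Matrix (Fin 3) (Fin 3) ℝ) (hQ : Q.IsSymm) :
    ((Q ^ 3).trace) ^ 2 ≤ ((Q ^ 2).trace) ^ 3 := by
  have hsym : ∀ i j, Q j i = Q i j := fun i j => by
    have := congrFun (congrFun hQ i) j
    simpa [Matrix.transpose_apply] using this
  set A : Matrix (Fin 3) (Fin 3) ℝ := Q * Q with hA
  have hAsym : ∀ i j, A j i = A i j := fun i j => by
    simp only [hA, Matrix.mul_apply]
    apply Finset.sum_congr rfl
    intro k _
    rw [hsym j k, hsym k i]; ring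
  have hA_eq : ∀ i j, A i j = ∑ k, Q i k * Q j k := fun i j => by
    simp only [hA, Matrix.mul_apply]
    apply Finset.sum_congr rfl
    intro k _
    rw [hsym k j]
  set s : ℝ := ∑ p : Fin 3 × Fin 3, (Q p.1 p.2) ^ 2 with hs
  set u : ℝ := ∑ p : Fin 3 × Fin 3, (A p.1 p.2) ^ 2 with hu
  have hs_eq : (Q ^ 2).trace = s := by
    rw [pow_two]
    simp only [Matrix.trace, Matrix.diag, Matrix.mul_apply, hs, Fintype.sum_prod_type]
    apply Finset.sum_congr rfl; intro i _
    apply Finset.sum_congr rfl; intro j _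
    rw [hsym j i]; ring
  have hsnn : 0 ≤ s := Finset.sum_nonneg fun p _ => sq_nonneg _
  have ht_eq : (Q ^ 3).trace = ∑ p : Fin 3 × Fin 3, Q p.1 p.2 * A p.1 p.2 := by
    have h3 : Q ^ 3 = Q * A := by rw [hA, pow_succ, pow_two, mul_assoc]
    rw [h3]
    simp only [Matrix.trace, Matrix.diag, Matrix.mul_apply, Fintype.sum_prod_type]
    apply Finset.sum_congr rfl; intro i _
    apply Finset.sum_congr rfl; intro j _
    rw [hAsym j i]
  -- Cauchy-Schwarz: t^2 ≤ s * u
  have hcs : ((Q ^ 3).trace) ^ 2 ≤ s * u := by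
    rw [ht_eq, hs, hu]
    exact Finset.sum_mul_sq_le_sq_mul_sq _ _ _
  -- u ≤ s^2
  have hus : u ≤ s ^ 2 := by
    have hstep : ∀ p : Fin 3 × Fin 3, (A p.1 p.2) ^ 2 ≤
        (∑ k, (Q p.1 k) ^ 2) * (∑ k, (Q p.2 k) ^ 2) := by
      intro p
      rw [hA_eq]
      exact Finset.sum_mul_sq_le_sq_mul_sq _ _ _
    calc u ≤ ∑ p : Fin 3 × Fin 3, (∑ k, (Q p.1 k) ^ 2) * (∑ k, (Q p.2 k) ^ 2) :=
            Finset.sum_le_sum fun p _ => hstep p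
      _ = s ^ 2 := by
          rw [Fintype.sum_prod_type]
          simp only [← Finset.sum_mul, ← Finset.mul_sum]
          rw [hs, Fintype.sum_prod_type, pow_two]
    -- done
  calc ((Q ^ 3).trace) ^ 2 ≤ s * u := hcs
    _ ≤ s * s ^ 2 := by nlinarith
    _ = ((Q ^ 2).trace) ^ 3 := by rw [hs_eq]; ring

theorem damping_coefficients (a b c : ℝ) (ha : 0 < a) (hc : 0 < c)
    (habc : a * c ≥ 9 / 16 * b ^ 2) (hb : b ≠ 0) :
    |b| * (3 * (8 * c / (3 * |b|)) / 8) - c ≤ 0 ∧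
    |b| * (3 / (2 * (8 * c / (3 * |b|)))) - a ≤ -(a - 9 * b ^ 2 / (16 * c)) ∧
    0 ≤ a - 9 * b ^ 2 / (16 * c) ∧
    ∀ Q : Matrix (Fin 3) (Fin 3) ℝ, Q.IsSymm → Q.trace = 0 →
      -a * (Q ^ 2).trace + b * (Q ^ 3).trace - c * ((Q ^ 2).trace) ^ 2 ≤
        -(a - 9 * b ^ 2 / (16 * c)) * (Q ^ 2).trace := by
  have hbpos : (0:ℝ) < |b| := abs_pos.mpr hb
  have hb2 : |b| ^ 2 = b ^ 2 := sq_abs b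
  refine ⟨?_, ?_, ?_, ?_⟩
  · have : |b| * (3 * (8 * c / (3 * |b|)) / 8) = c := by
      field_simp
    rw [this]; linarith
  · have : |b| * (3 / (2 * (8 * c / (3 * |b|)))) = 9 * b ^ 2 / (16 * c) := by
      field_simp; nlinarith [sq_abs b]
    rw [this]; linarith
  · rw [ge_iff_le, ← sub_nonneg] at habc
    have := div_nonneg (by linarith : (0:ℝ) ≤ 16 * (a * c - 9 / 16 * b ^ 2)) (by linarith : (0:ℝ) ≤ 16 * c)
    have heq : 16 * (a * c - 9 / 16 * b ^ 2) / (16 * c) = a - 9 * b ^ 2 / (16 * c) := by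
      field_simp
    linarith [heq ▸ this]
  · intro Q hQsym _
    set s : ℝ := (Q ^ 2).trace with hs
    set t : ℝ := (Q ^ 3).trace with ht
    have hts : t ^ 2 ≤ s ^ 3 := key_csq Q hQsym
    have hsnn : 0 ≤ s := by
      have h0 : 0 ≤ s ^ 3 := le_trans (sq_nonneg t) hts
      by_contra h
      push_neg at h
      nlinarith [mul_pos (mul_pos (neg_pos.mpr h) (neg_pos.mpr h)) (neg_pos.mpr h)]
    -- suffices: b * t ≤ c * s^2 + 9 b^2/(16 c) * s
    have hK : 0 ≤ 9 * b ^ 2 / (16 * c) := by positivity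
    have key : b * t ≤ c * s ^ 2 + 9 * b ^ 2 / (16 * c) * s := by
      set K := 9 * b ^ 2 / (16 * c) with hKdef
      have hcK : 16 * c * K = 9 * b ^ 2 := by
        rw [hKdef]; field_simp
      nlinarith [sq_nonneg (c * s ^ 2 - K * s), sq_nonneg (c * s ^ 2 + K * s - b * t),
        sq_nonneg (c * s ^ 2 + K * s + b * t), mul_nonneg (mul_nonneg hc.le hsnn) hsnn,
        mul_nonneg hK hsnn, sq_nonneg (b * t), hts, sq_nonneg s,
        mul_nonneg hsnn (sq_nonneg b)]
    nlinarith [key]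
end

section
/- Let f : [0, ∞) → ℝ be nonnegative. If f satisfies f(t) ≤ C(H₀ + H₀² + H₀^{5/2} + (1 + H₀⁵) f(t)²) for all t, f is continuous, f(0) ≤ H₀, and H₀ ≤ min{1/(24C²), 1} with C ≥ 1, then f(t) ≤ 1/(2C) for all t ≥ 0. -/
theorem bootstrap_global_bound (f : ℝ → ℝ) (C H0 : ℝ) (hC : 1 ≤ C) (hH0 : 0 ≤ H0)
    (hnonneg : ∀ t, 0 ≤ t → 0 ≤ f t)
    (hineq : ∀ t, 0 ≤ t →
      f t ≤ C * (H0 + H0 ^ 2 + H0 ^ (5 / 2 : ℝ) + (1 + H0 ^ 5) * (f t) ^ 2))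
    (hcont : ContinuousOn f (Set.Ici 0))
    (hf0 : f 0 ≤ H0)
    (hsmall : H0 ≤ min (1 / (24 * C ^ 2)) 1) :
    ∀ t, 0 ≤ t → f t ≤ 1 / (2 * C) := by
  have hC0 : (0:ℝ) < C := lt_of_lt_of_le one_pos hC
  have hC2 : (0:ℝ) < 24 * C ^ 2 := by positivity
  have hH1 : H0 ≤ 1 := le_trans hsmall (min_le_right _ _)
  have hH2 : H0 ≤ 1 / (24 * C ^ 2) := le_trans hsmall (min_le_left _ _)
  have hH2' : 24 * C ^ 2 * H0 ≤ 1 := by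
    have := (le_div_iff₀ hC2).mp hH2
    linarith
  have hr : H0 ^ (5 / 2 : ℝ) ≤ H0 := by
    rcases eq_or_lt_of_le hH0 with h | h
    · rw [← h, Real.zero_rpow (by norm_num)]
    · calc H0 ^ (5 / 2 : ℝ) ≤ H0 ^ (1 : ℝ) :=
            Real.rpow_le_rpow_of_exponent_ge h hH1 (by norm_num)
        _ = H0 := Real.rpow_one _
  have hsq : H0 ^ 2 ≤ H0 := by nlinarith
  have h5 : H0 ^ 5 ≤ H0 := by
    calc H0 ^ 5 = H0 ^ 4 * H0 := by ring
      _ ≤ 1 * H0 := mul_le_mul_of_nonneg_right (pow_le_one₀ hH0 hH1) hH0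
      _ = H0 := one_mul _
  have key : ∀ t, 0 ≤ t → f t ≤ 1 / (2 * C) → f t ≤ 6 / (23 * C) := by
    intro t ht hle
    have h1 := hineq t ht
    have h0 := hnonneg t ht
    have hle' : 2 * C * f t ≤ 1 := by
      rw [le_div_iff₀ (by positivity)] at hle; linarith
    rw [le_div_iff₀ (by positivity)]
    nlinarith [mul_nonneg h0 h0, sq_nonneg (f t), mul_nonneg hH0 h0,
      mul_nonneg (mul_nonneg hH0 hH0) h0, sq_nonneg C, sq_nonneg (C * f t),
      mul_le_mul_of_nonneg_left hr (le_of_lt hC0),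
      mul_le_mul_of_nonneg_left hsq (le_of_lt hC0),
      mul_nonneg (le_of_lt hC0) hH0]
  intro t ht
  by_contra hgt
  push_neg at hgt
  have hf0' : f 0 ≤ 1 / (3 * C) := by
    refine le_trans hf0 (le_trans hH2 ?_)
    rw [div_le_div_iff₀ hC2 (by positivity)]
    nlinarith
  have h13 : (1:ℝ) / (3 * C) ≤ 1 / (2 * C) := by
    rw [div_le_div_iff₀ (by positivity) (by positivity)]; nlinarith
  have hmem : (1 / (3 * C)) ∈ Set.Icc (f 0) (f t) := ⟨hf0', le_trans h13 hgt.le⟩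
  have hsub : Set.Icc (0:ℝ) t ⊆ Set.Ici 0 := Set.Icc_subset_Ici_self
  obtain ⟨s, hs, hfs⟩ := intermediate_value_Icc ht (hcont.mono hsub) hmem
  have hs0 : (0:ℝ) ≤ s := hs.1
  have h2 := key s hs0 (by rw [hfs]; exact h13)
  rw [hfs] at h2
  have : (6:ℝ) / (23 * C) < 1 / (3 * C) := by
    rw [div_lt_div_iff₀ (by positivity) (by positivity)]; nlinarith
  linarith
end
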